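/- arXiv:1510.03076 — 2 statements merged into one kernel-verified Lean document; each statement's English description precedes it below -/
import Mathlib

section
/- If the symmetric bilinear form B on V is nondegenerate, then the loop-space form Ω is nondegenerate: if f ∈ K satisfies Ω(f, g) = 0 for all g ∈ K, then f = 0. -/
open Polynomial in
theorem algebraMap_ratFunc_eq_aeval (F : Type*) [Field F] (p : F[X]) :
    algebraMap F[X] (RatFunc F) p = Polynomial.aeval RatFunc.X p := by
  have h : (IsScalarTower.toAlgHom F F[X] (RatFunc F)) = Polynomial.aeval (RatFunc.X (K := F)) :=
    Polynomial.algHom_ext (by simp [RatFunc.algebraMap_X])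
  exact DFunLike.congr_fun h p

open Polynomial in
/-- Injectivity of `aeval X⁻¹ : F[X] → F(q)`. -/
theorem aeval_inv_injective (F : Type*) [Field F] :
    Function.Injective (Polynomial.aeval (RatFunc.X (K := F))⁻¹ : F[X] →ₐ[F] RatFunc F) := by
  rw [injective_iff_map_eq_zero]
  intro p hp
  haveI : Invertible (RatFunc.X (K := F))⁻¹ :=
    invertibleOfNonzero (inv_ne_zero RatFunc.X_ne_zero)
  have h2 : (⅟(RatFunc.X (K := F))⁻¹) = RatFunc.X := by
    rw [invOf_eq_inv, inv_inv]
  have hp' : Polynomial.eval₂ (algebraMap F (RatFunc F)) (RatFunc.X)⁻¹ p = 0 := by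
    rwa [Polynomial.aeval_def] at hp
  rw [← Polynomial.eval₂_reverse_eq_zero_iff (algebraMap F (RatFunc F)) (RatFunc.X)⁻¹ p] at hp'
  rw [h2] at hp'
  have h3 : algebraMap F[X] (RatFunc F) p.reverse = 0 := by
    rw [algebraMap_ratFunc_eq_aeval, Polynomial.aeval_def]
    exact hp'
  have h4 : p.reverse = 0 := RatFunc.algebraMap_injective F (by simpa using h3)
  exact Polynomial.reverse_eq_zero.mp h4

noncomputable section

open scoped TensorProduct

variable (F : Type*) [Field F]

/-- The automorphism `q ↦ q⁻¹` of `F(q)`: the unique `F`-algebra map sending `q` to `q⁻¹`. -/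
def qinv : RatFunc F →ₐ[F] RatFunc F :=
  IsFractionRing.liftAlgHom (aeval_inv_injective F)

/-- Coefficient of `qⁿ` in the Laurent-series expansion at `q = 0`, as an `F`-linear map. -/
def coeffL (n : ℤ) : RatFunc F →ₗ[F] F where
  toFun h := ((h : LaurentSeries F)).coeff n
  map_add' a b := by
    rw [map_add, HahnSeries.coeff_add]
  map_smul' c a := by
    rw [RatFunc.smul_eq_C_mul, map_mul, ← RatFunc.algebraMap_C, ← IsScalarTower.algebraMap_apply]
    simp

/-- `Res_{q=0} (h dq)`: the coefficient of `q⁻¹` in the Laurent expansion of `h` at `q = 0`. -/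
def res0 (h : RatFunc F) : F := coeffL F (-1) h

/-- `Res_{q=∞} (h dq) := −Res_{q=0} (q⁻² h(q⁻¹) dq)`. -/
def resInf (h : RatFunc F) : F := - res0 F ((RatFunc.X)⁻¹ ^ 2 * qinv F h)

variable (V : Type*) [AddCommGroup V] [Module F V]

/-- The loop space `K := F(q) ⊗_F V` of `V`-valued rational functions. -/
abbrev LoopK := RatFunc F ⊗[F] V

/-- `f(q) ↦ f(q⁻¹)` on `K`. -/
def finv : LoopK F V →ₗ[F] LoopK F V := LinearMap.rTensor V (qinv F).toLinearMap

/-- The `V`-valued coefficient of `qⁿ` in the expansion at `q = 0` of an element of `K`. -/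
def vcoeff (n : ℤ) : LoopK F V →ₗ[F] V :=
  (TensorProduct.lid F V).toLinearMap ∘ₗ LinearMap.rTensor V (coeffL F n)

/-- The loop-space form
`Ω(f,g) = −Res_{q=0}(q⁻¹ B_q(f(q⁻¹),g(q)) dq) − Res_{q=∞}(q⁻¹ B_q(f(q⁻¹),g(q)) dq)`. -/
def Omega (B : LinearMap.BilinForm F V) (f g : LoopK F V) : F :=
  - res0 F ((RatFunc.X)⁻¹ * (LinearMap.BilinForm.baseChange (RatFunc F) B) (finv F V f) g)
  - resInf F ((RatFunc.X)⁻¹ * (LinearMap.BilinForm.baseChange (RatFunc F) B) (finv F V f) g)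

/-- `K₊`: `V`-valued Laurent polynomials in `q`. -/
def Kplus : Submodule F (LoopK F V) :=
  Submodule.span F {z : LoopK F V | ∃ (n : ℤ) (v : V), z = (RatFunc.X ^ n) ⊗ₜ[F] v}

/-- `K₋`: `V`-valued rational functions regular at `q = 0` and vanishing at `q = ∞`. -/
def Kminus : Submodule F (LoopK F V) where
  carrier := {f | (∀ n : ℤ, n < 0 → vcoeff F V n f = 0) ∧
    (∀ n : ℤ, n ≤ 0 → vcoeff F V n (finv F V f) = 0)}
  add_mem' := by
    rintro a b ⟨ha1, ha2⟩ ⟨hb1, hb2⟩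
    constructor
    · intro n hn; rw [map_add, ha1 n hn, hb1 n hn, add_zero]
    · intro n hn; rw [map_add, map_add, ha2 n hn, hb2 n hn, add_zero]
  zero_mem' := by
    constructor <;> intro n hn <;> simp
  smul_mem' := by
    rintro c a ⟨ha1, ha2⟩
    constructor
    · intro n hn; rw [map_smul, ha1 n hn, smul_zero]
    · intro n hn; rw [map_smul, map_smul, ha2 n hn, smul_zero]

/-- The value at `q = 1` of a `V`-valued Laurent polynomial (the sum of its coefficients). -/
def evalOne (f : LoopK F V) : V := ∑ᶠ n : ℤ, vcoeff F V n f

/-- Scalar `K₊ ⊂ F(q)`: the Laurent polynomials. -/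
def KplusS : Submodule F (RatFunc F) :=
  Submodule.span F (Set.range fun n : ℤ => (RatFunc.X : RatFunc F) ^ n)

/-- Scalar `K₋ ⊂ F(q)`: rational functions regular at `q = 0` and vanishing at `q = ∞`. -/
def KminusS : Submodule F (RatFunc F) where
  carrier := {h | (∀ n : ℤ, n < 0 → coeffL F n h = 0) ∧
    (∀ n : ℤ, n ≤ 0 → coeffL F n (qinv F h) = 0)}
  add_mem' := by
    rintro a b ⟨ha1, ha2⟩ ⟨hb1, hb2⟩
    constructor
    · intro n hn; rw [map_add, ha1 n hn, hb1 n hn, add_zero]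
    · intro n hn; rw [map_add, map_add, ha2 n hn, hb2 n hn, add_zero]
  zero_mem' := by
    constructor <;> intro n hn <;> simp
  smul_mem' := by
    rintro c a ⟨ha1, ha2⟩
    constructor
    · intro n hn; rw [map_smul, ha1 n hn, smul_zero]
    · intro n hn; rw [map_smul, map_smul, ha2 n hn, smul_zero]


/-! ### Auxiliary lemmas for Omega_nondegenerate -/

section Aux

variable {F : Type*} [Field F]

open RatFunc

lemma qinv_algebraMap' (p : Polynomial F) :
    qinv F (algebraMap (Polynomial F) (RatFunc F) p) = Polynomial.aeval (RatFunc.X)⁻¹ p := by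
  unfold qinv
  rw [IsFractionRing.liftAlgHom_apply, IsFractionRing.lift_algebraMap]
  rfl

lemma qinv_X : qinv F (RatFunc.X) = (RatFunc.X)⁻¹ := by
  rw [← RatFunc.algebraMap_X, qinv_algebraMap', Polynomial.aeval_X, RatFunc.algebraMap_X]

lemma qinv_qinv (a : RatFunc F) : qinv F (qinv F a) = a := by
  have h : ∀ p : Polynomial F,
      qinv F (qinv F (algebraMap (Polynomial F) (RatFunc F) p)) =
        algebraMap (Polynomial F) (RatFunc F) p := by
    intro p
    rw [qinv_algebraMap', ← Polynomial.aeval_algHom_apply, map_inv₀, qinv_X, inv_inv,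
      ← algebraMap_ratFunc_eq_aeval]
  conv_lhs => rw [← RatFunc.num_div_denom a]
  rw [map_div₀, map_div₀, h, h, RatFunc.num_div_denom]

lemma qinv_ne_zero {a : RatFunc F} (ha : a ≠ 0) : qinv F a ≠ 0 := by
  intro h
  apply ha
  have := congrArg (qinv F) h
  rwa [qinv_qinv, map_zero] at this

lemma X_ne_one : (RatFunc.X : RatFunc F) ≠ 1 := by
  intro h
  rw [← RatFunc.algebraMap_X, ← map_one (algebraMap (Polynomial F) (RatFunc F))] at h
  have h2 := RatFunc.algebraMap_injective F h
  simpa using congrArg Polynomial.natDegree h2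

lemma one_sub_X_ne_zero : (1 - RatFunc.X : RatFunc F) ≠ 0 :=
  sub_ne_zero.mpr (Ne.symm X_ne_one)

lemma one_sub_X_inv_ne_zero : (1 - (RatFunc.X)⁻¹ : RatFunc F) ≠ 0 := by
  intro h
  have : ((RatFunc.X : RatFunc F))⁻¹ = 1 := by
    have := sub_eq_zero.mp h; exact this.symm
  exact X_ne_one (inv_eq_one.mp this)

/-- The Laurent series `1 + q + q² + ⋯ = (1-q)⁻¹`. -/
noncomputable def Useries (F : Type*) [Field F] : LaurentSeries F :=
  HahnSeries.ofPowerSeries ℤ F (PowerSeries.invUnitsSub (1 : Fˣ))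

lemma coe_powerSeries_coeff_neg (x : PowerSeries F) {n : ℤ} (hn : n < 0) :
    (HahnSeries.ofPowerSeries ℤ F x).coeff n = 0 := by
  rw [HahnSeries.ofPowerSeries_apply, HahnSeries.embDomain_notin_range]
  rintro ⟨m, hm⟩
  simp at hm
  omega

lemma Useries_mul : Useries F * (1 - HahnSeries.single 1 1) = 1 := by
  have h := PowerSeries.invUnitsSub_mul_sub (1 : Fˣ)
  have := congrArg (HahnSeries.ofPowerSeries ℤ F) h
  rw [map_mul, map_sub, map_one, HahnSeries.ofPowerSeries_C, HahnSeries.ofPowerSeries_X] at this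
  simpa [Useries] using this

lemma coe_one_sub_X : ((1 - RatFunc.X : RatFunc F) : LaurentSeries F)
    = 1 - HahnSeries.single 1 1 := by
  rw [map_sub, map_one, RatFunc.coe_X]

lemma coe_inv_one_sub_X :
    (((1 - RatFunc.X)⁻¹ : RatFunc F) : LaurentSeries F) = Useries F := by
  rw [map_inv₀, coe_one_sub_X]
  exact inv_eq_of_mul_eq_one_left Useries_mul

lemma Useries_coeff_zero : (Useries F).coeff 0 = 1 := by
  have h := HahnSeries.ofPowerSeries_apply_coeff (Γ := ℤ)
    (PowerSeries.invUnitsSub (1 : Fˣ)) 0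
  simp only [Nat.cast_zero] at h
  rw [Useries, h, PowerSeries.coeff_invUnitsSub]
  simp

lemma Useries_coeff_neg_one : (Useries F).coeff (-1) = 0 :=
  coe_powerSeries_coeff_neg _ (by norm_num)

lemma coe_X_inv : (((RatFunc.X)⁻¹ : RatFunc F) : LaurentSeries F)
    = HahnSeries.single (-1) 1 := by
  rw [map_inv₀, RatFunc.coe_X]
  refine inv_eq_of_mul_eq_one_left ?_
  rw [HahnSeries.single_mul_single, neg_add_cancel, one_mul]
  exact HahnSeries.single_zero_one

lemma coeffL_apply (m : ℤ) (r : RatFunc F) :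
    coeffL F m r = ((r : LaurentSeries F)).coeff m := rfl

lemma res0_X_inv_mul : res0 F ((RatFunc.X)⁻¹ * (1 - RatFunc.X)⁻¹) = 1 := by
  unfold res0
  rw [coeffL_apply, map_mul, coe_X_inv, coe_inv_one_sub_X]
  have h := HahnSeries.coeff_single_mul_add (r := (1:F)) (x := Useries F)
    (a := (0:ℤ)) (b := (-1:ℤ))
  rw [zero_add] at h
  rw [h, one_mul, Useries_coeff_zero]

lemma res0_neg_inv : res0 F (-(1 - RatFunc.X)⁻¹ : RatFunc F) = 0 := by
  unfold res0
  rw [coeffL_apply, map_neg, coe_inv_one_sub_X]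
  rw [HahnSeries.coeff_neg, Useries_coeff_neg_one, neg_zero]

lemma scalar_omega (c : RatFunc F) (hc : c ≠ 0) :
    - res0 F ((RatFunc.X)⁻¹ * (qinv F c * ((1 - RatFunc.X) * qinv F c)⁻¹))
    - resInf F ((RatFunc.X)⁻¹ * (qinv F c * ((1 - RatFunc.X) * qinv F c)⁻¹)) = -1 := by
  have hq : qinv F c ≠ 0 := qinv_ne_zero hc
  have hX : (RatFunc.X : RatFunc F) ≠ 0 := RatFunc.X_ne_zero
  have h1 : (1 - RatFunc.X : RatFunc F) ≠ 0 := one_sub_X_ne_zero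
  have h2 : (1 - (RatFunc.X)⁻¹ : RatFunc F) ≠ 0 := one_sub_X_inv_ne_zero
  have hA : (RatFunc.X)⁻¹ * (qinv F c * ((1 - RatFunc.X) * qinv F c)⁻¹)
      = (RatFunc.X)⁻¹ * (1 - RatFunc.X)⁻¹ := by
    field_simp
  rw [hA, res0_X_inv_mul]
  unfold resInf
  have hqA : qinv F ((RatFunc.X)⁻¹ * (1 - RatFunc.X)⁻¹)
      = RatFunc.X * (1 - (RatFunc.X)⁻¹)⁻¹ := by
    rw [map_mul, map_inv₀, map_inv₀, qinv_X, map_sub, map_one, qinv_X, inv_inv]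
  rw [hqA]
  have key : RatFunc.X * (1 - (RatFunc.X)⁻¹) = -(1 - RatFunc.X : RatFunc F) := by
    rw [mul_sub, mul_inv_cancel₀ hX, mul_one]; ring
  have h3 : ((RatFunc.X)⁻¹ : RatFunc F) ^ 2 * (RatFunc.X * (1 - (RatFunc.X)⁻¹)⁻¹)
      = -(1 - RatFunc.X)⁻¹ := by
    have e1 : ((RatFunc.X)⁻¹ : RatFunc F) ^ 2 * (RatFunc.X * (1 - (RatFunc.X)⁻¹)⁻¹)
        = ((RatFunc.X)⁻¹ * RatFunc.X) * ((RatFunc.X)⁻¹ * (1 - (RatFunc.X)⁻¹)⁻¹) := by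
      ring
    rw [e1, inv_mul_cancel₀ hX, one_mul, ← mul_inv, key, inv_neg]
  rw [h3, res0_neg_inv, neg_zero, sub_zero]

end Aux


section Aux2

variable {F : Type*} [Field F] {V : Type*} [AddCommGroup V] [Module F V]

lemma finv_tmul (r : RatFunc F) (v : V) :
    finv F V (r ⊗ₜ[F] v) = qinv F r ⊗ₜ[F] v := rfl

lemma baseChange_finv_one_tmul (B : LinearMap.BilinForm F V) (f : LoopK F V) (w : V) :
    (LinearMap.BilinForm.baseChange (RatFunc F) B) (finv F V f) ((1 : RatFunc F) ⊗ₜ[F] w)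
      = qinv F ((LinearMap.BilinForm.baseChange (RatFunc F) B) f ((1 : RatFunc F) ⊗ₜ[F] w)) := by
  induction f using TensorProduct.induction_on with
  | zero => simp
  | tmul r v =>
    rw [finv_tmul, LinearMap.BilinForm.baseChange_tmul, LinearMap.BilinForm.baseChange_tmul,
      Algebra.smul_def, Algebra.smul_def, map_mul, AlgHom.commutes, mul_one, mul_one]
  | add x y hx hy =>
    simp only [map_add, LinearMap.add_apply, hx, hy]

lemma vcoeff_tmul (m : ℤ) (r : RatFunc F) (v : V) :
    vcoeff F V m (r ⊗ₜ[F] v) = coeffL F m r • v := by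
  simp [vcoeff]

lemma bilin_vcoeff (B : LinearMap.BilinForm F V) (m : ℤ) (f : LoopK F V) (w : V) :
    B (vcoeff F V m f) w
      = coeffL F m ((LinearMap.BilinForm.baseChange (RatFunc F) B) f ((1 : RatFunc F) ⊗ₜ[F] w)) := by
  induction f using TensorProduct.induction_on with
  | zero => simp
  | tmul r v =>
    rw [vcoeff_tmul, LinearMap.BilinForm.baseChange_tmul, mul_one, map_smul,
      LinearMap.smul_apply, map_smul]
    simp [smul_eq_mul, mul_comm]
  | add x y hx hy =>
    simp only [map_add, LinearMap.add_apply, hx, hy]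

lemma ratfunc_eq_zero_of_coeff (r : RatFunc F) (h : ∀ m : ℤ, coeffL F m r = 0) : r = 0 := by
  have h2 : (r : LaurentSeries F) = ((0 : RatFunc F) : LaurentSeries F) := by
    rw [map_zero]
    ext m
    exact h m
  exact RingHom.injective _ h2

end Aux2

/-- if `B` is nondegenerate, then `Ω` is nondegenerate. -/
theorem Omega_nondegenerate [FiniteDimensional F V] (B : LinearMap.BilinForm F V)
    (hB : ∀ u v : V, B u v = B v u)
    (hnd : ∀ v : V, (∀ w : V, B v w = 0) → v = 0) :
    ∀ f : LoopK F V, (∀ g : LoopK F V, Omega F V B f g = 0) → f = 0 := by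
  intro f hf
  have key : ∀ w : V,
      (LinearMap.BilinForm.baseChange (RatFunc F) B) f ((1 : RatFunc F) ⊗ₜ[F] w) = 0 := by
    intro w
    by_contra hc
    set c := (LinearMap.BilinForm.baseChange (RatFunc F) B) f ((1 : RatFunc F) ⊗ₜ[F] w) with hcdef
    set s := ((1 - RatFunc.X) * qinv F c)⁻¹ with hsdef
    have hsw : (LinearMap.BilinForm.baseChange (RatFunc F) B) (finv F V f) (s ⊗ₜ[F] w)
        = qinv F c * s := by
      have ht : (s ⊗ₜ[F] w : LoopK F V) = s • ((1 : RatFunc F) ⊗ₜ[F] w) := by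
        rw [TensorProduct.smul_tmul']
        congr 1
        exact (mul_one s).symm
      rw [ht, LinearMap.map_smul (((LinearMap.BilinForm.baseChange (RatFunc F) B)) (finv F V f)),
        baseChange_finv_one_tmul, ← hcdef, smul_eq_mul, mul_comm]
    have hg := hf (s ⊗ₜ[F] w)
    unfold Omega at hg
    rw [hsw] at hg
    have hso := scalar_omega c hc
    rw [hsdef] at hg
    rw [hg] at hso
    norm_num at hso
  have hv : ∀ m : ℤ, vcoeff F V m f = 0 := by
    intro m
    apply hnd
    intro w
    rw [bilin_vcoeff, key w, map_zero]
  classical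
  let b := Module.finBasis F V
  let bc := b.baseChange (RatFunc F)
  have hrep : ∀ i, bc.repr f i = 0 := by
    intro i
    apply ratfunc_eq_zero_of_coeff
    intro m
    have hsum : vcoeff F V m f = ∑ j, coeffL F m (bc.repr f j) • b j := by
      conv_lhs => rw [← bc.sum_repr f]
      rw [map_sum]
      refine Finset.sum_congr rfl fun j _ => ?_
      rw [Module.Basis.baseChange_apply, TensorProduct.smul_tmul', smul_eq_mul, mul_one, vcoeff_tmul]
    have h0 := hv m
    rw [hsum] at h0
    exact Fintype.linearIndependent_iff.mp b.linearIndependent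
      (fun j => coeffL F m (bc.repr f j)) h0 i
  apply bc.forall_coord_eq_zero_iff.mp
  intro i
  rw [Module.Basis.coord_apply]
  exact hrep i

end
end

section
/- Let R = ℚ[[Q]] be the ring of formal power series (the Novikov ring), m = (Q) its maximal ideal, and for each integer k ≥ 1 let Ψᵏ : R → R be the ℚ-algebra endomorphism determined by substituting Q ↦ Qᵏ (so Ψᵏ(Σ aₙ Qⁿ) = Σ aₙ Qᵏⁿ, and Ψ¹ = id). Then: (a) for every t ∈ m the family (Ψᵏ(t)/k²)_{k≥1} is summable in the Q-adic topology, with sum lying in m; and (b) the resulting map m → m, t ↦ Σ_{k≥1} Ψᵏ(t)/k², is a bijection. -/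
noncomputable section

/-- The Adams operation `Ψᵏ` on the Novikov ring `ℚ[[Q]]`: substitution `Q ↦ Qᵏ`,
defined coefficientwise by `Ψᵏ(Σ aₙ Qⁿ) = Σ aₙ Qᵏⁿ`. -/
def adams (k : ℕ) (f : PowerSeries ℚ) : PowerSeries ℚ :=
  PowerSeries.mk fun n => if k ∣ n then PowerSeries.coeff (n / k) f else 0

/-- The `k`-th term `Ψᵏ(t)/k²` of the series. -/
def adamsTerm (t : PowerSeries ℚ) (k : ℕ) : PowerSeries ℚ :=
  (((k : ℚ) ^ 2)⁻¹) • adams k t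

/-- The sum `Σ_{k≥1} Ψᵏ(t)/k²`, computed coefficientwise (each coefficient is given by a
finite sum whenever the family is summable in the `Q`-adic sense). -/
def adamsSum (t : PowerSeries ℚ) : PowerSeries ℚ :=
  PowerSeries.mk fun m => ∑ᶠ k : ℕ, if 1 ≤ k then PowerSeries.coeff m (adamsTerm t k) else 0

/-- The maximal ideal `m = (Q)` of the Novikov ring `ℚ[[Q]]`. -/
def novikovIdeal : Ideal (PowerSeries ℚ) := Ideal.span {PowerSeries.X}

lemma coeff_adamsTerm (t : PowerSeries ℚ) (k m : ℕ) :
    PowerSeries.coeff m (adamsTerm t k)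
      = ((k : ℚ) ^ 2)⁻¹ * (if k ∣ m then PowerSeries.coeff (m / k) t else 0) := by
  simp [adamsTerm, adams, smul_eq_mul]

lemma mem_novikovIdeal_iff (f : PowerSeries ℚ) :
    f ∈ novikovIdeal ↔ PowerSeries.constantCoeff f = 0 := by
  rw [novikovIdeal, Ideal.mem_span_singleton, PowerSeries.X_dvd_iff]

lemma mem_novikovIdeal_pow_iff (f : PowerSeries ℚ) (n : ℕ) :
    f ∈ novikovIdeal ^ n ↔ ∀ i < n, PowerSeries.coeff i f = 0 := by
  rw [novikovIdeal, Ideal.span_singleton_pow, Ideal.mem_span_singleton,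
    PowerSeries.X_pow_dvd_iff]

lemma coeff_adamsSum (t : PowerSeries ℚ) (m : ℕ) (hm : 1 ≤ m) :
    PowerSeries.coeff m (adamsSum t)
      = ∑ k ∈ m.divisors, ((k : ℚ) ^ 2)⁻¹ * PowerSeries.coeff (m / k) t := by
  rw [adamsSum, PowerSeries.coeff_mk]
  rw [finsum_eq_sum_of_support_subset _ (s := m.divisors)]
  · apply Finset.sum_congr rfl
    intro k hk
    rw [Nat.mem_divisors] at hk
    have hk1 : 1 ≤ k := Nat.pos_of_dvd_of_pos hk.1 hm
    rw [if_pos hk1, coeff_adamsTerm, if_pos hk.1]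
  · intro k hk
    simp only [Function.mem_support, Ne] at hk
    by_contra hkd
    apply hk
    rw [Finset.mem_coe, Nat.mem_divisors] at hkd
    push_neg at hkd
    by_cases hk1 : 1 ≤ k
    · rw [if_pos hk1, coeff_adamsTerm]
      by_cases hd : k ∣ m
      · exact absurd (hkd hd) (by omega)
      · rw [if_neg hd, mul_zero]
    · rw [if_neg hk1]

lemma coeff_adamsSum' (t : PowerSeries ℚ) (m : ℕ) (hm : 1 ≤ m) :
    PowerSeries.coeff m (adamsSum t)
      = PowerSeries.coeff m t +
        ∑ k ∈ m.divisors.erase 1, ((k : ℚ) ^ 2)⁻¹ * PowerSeries.coeff (m / k) t := by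
  rw [coeff_adamsSum t m hm, ← Finset.sum_erase_add _ _ (Nat.one_mem_divisors.2 (by omega))]
  simp [add_comm]

lemma coeff_zero_adamsSum (t : PowerSeries ℚ) (ht : PowerSeries.constantCoeff t = 0) :
    PowerSeries.coeff 0 (adamsSum t) = 0 := by
  rw [adamsSum, PowerSeries.coeff_mk]
  apply finsum_eq_zero_of_forall_eq_zero
  intro k
  rcases le_or_gt 1 k with h | h
  · rw [if_pos h, coeff_adamsTerm, if_pos (dvd_zero k), Nat.zero_div,
      ← PowerSeries.coeff_zero_eq_constantCoeff_apply] at *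
    simp [ht]
  · rw [if_neg (by omega)]

def invCoeff (u : PowerSeries ℚ) : ℕ → ℚ
  | 0 => 0
  | (m+1) => PowerSeries.coeff (m+1) u -
      ∑ k ∈ ((m+1).divisors.erase 1).attach,
        ((k.1 : ℚ) ^ 2)⁻¹ * invCoeff u ((m+1) / k.1)
  decreasing_by
    have hk := k.2
    rw [Finset.mem_erase, Nat.mem_divisors] at hk
    have : 1 < k.1 := lt_of_le_of_ne (Nat.pos_of_dvd_of_pos hk.2.1 (Nat.succ_pos m)) (Ne.symm hk.1)
    exact Nat.div_lt_self (Nat.succ_pos m) this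

lemma invCoeff_spec (u : PowerSeries ℚ) (m : ℕ) (hm : 1 ≤ m) :
    invCoeff u m = PowerSeries.coeff m u -
      ∑ k ∈ m.divisors.erase 1, ((k : ℚ) ^ 2)⁻¹ * invCoeff u (m / k) := by
  obtain ⟨m, rfl⟩ := Nat.exists_eq_add_of_le hm
  rw [show 1 + m = m + 1 by omega, invCoeff]
  congr 1
  exact Finset.sum_attach _ fun k : ℕ => ((k : ℚ) ^ 2)⁻¹ * invCoeff u ((m + 1) / k)

def invSeries (u : PowerSeries ℚ) : PowerSeries ℚ := PowerSeries.mk (invCoeff u)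

lemma coeff_invSeries (u : PowerSeries ℚ) (m : ℕ) :
    PowerSeries.coeff m (invSeries u) = invCoeff u m := PowerSeries.coeff_mk _ _

lemma invCoeff_zero (u : PowerSeries ℚ) : invCoeff u 0 = 0 := by simp [invCoeff]

lemma constantCoeff_invSeries (u : PowerSeries ℚ) :
    PowerSeries.constantCoeff (invSeries u) = 0 := by
  rw [← PowerSeries.coeff_zero_eq_constantCoeff_apply, coeff_invSeries, invCoeff_zero]

lemma adamsSum_invSeries (u : PowerSeries ℚ)
    (hu : PowerSeries.constantCoeff u = 0) : adamsSum (invSeries u) = u := by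
  ext m
  rcases Nat.eq_zero_or_pos m with rfl | hm
  · rw [coeff_zero_adamsSum _ (constantCoeff_invSeries u),
      PowerSeries.coeff_zero_eq_constantCoeff_apply, hu]
  · rw [coeff_adamsSum' _ m hm, coeff_invSeries, invCoeff_spec u m hm]
    simp only [coeff_invSeries]
    ring

lemma invSeries_adamsSum (t : PowerSeries ℚ)
    (ht : PowerSeries.constantCoeff t = 0) : invSeries (adamsSum t) = t := by
  ext m
  rw [coeff_invSeries]
  induction m using Nat.strong_induction_on with
  | _ m ih =>
    rcases Nat.eq_zero_or_pos m with rfl | hm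
    · rw [invCoeff_zero, PowerSeries.coeff_zero_eq_constantCoeff_apply, ht]
    · rw [invCoeff_spec _ m hm, coeff_adamsSum' t m hm]
      have hsum : ∀ k ∈ m.divisors.erase 1,
          ((k : ℚ) ^ 2)⁻¹ * invCoeff (adamsSum t) (m / k)
            = ((k : ℚ) ^ 2)⁻¹ * PowerSeries.coeff (m / k) t := by
        intro k hk
        rw [Finset.mem_erase, Nat.mem_divisors] at hk
        have h1 : 1 < k := lt_of_le_of_ne (Nat.pos_of_dvd_of_pos hk.2.1 hm) (Ne.symm hk.1)
        rw [ih (m / k) (Nat.div_lt_self hm h1)]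
      rw [Finset.sum_congr rfl hsum]
      ring

/-- (a) for `t ∈ m` the family `(Ψᵏ(t)/k²)_{k≥1}` is summable in the `Q`-adic
topology (for every `n`, all but finitely many terms lie in `(Q)ⁿ = mⁿ`), with sum in `m`;
and (b) the map `m → m`, `t ↦ Σ_{k≥1} Ψᵏ(t)/k²`, is a bijection. -/
theorem adamsSum_bijOn :
    (∀ t ∈ novikovIdeal,
      (∀ n : ℕ, {k : ℕ | 1 ≤ k ∧ adamsTerm t k ∉ novikovIdeal ^ n}.Finite) ∧
      adamsSum t ∈ novikovIdeal) ∧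
    Set.BijOn adamsSum (novikovIdeal : Set (PowerSeries ℚ)) (novikovIdeal : Set (PowerSeries ℚ)) := by
  have hmem : ∀ t ∈ novikovIdeal, adamsSum t ∈ novikovIdeal := by
    intro t ht
    rw [mem_novikovIdeal_iff] at ht ⊢
    rw [← PowerSeries.coeff_zero_eq_constantCoeff_apply, coeff_zero_adamsSum t ht]
  constructor
  · intro t ht
    have ht0 := (mem_novikovIdeal_iff t).1 ht
    refine ⟨fun n => Set.Finite.subset (Set.finite_Iio n) ?_, hmem t ht⟩
    intro k hk
    obtain ⟨hk1, hk2⟩ := hk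
    simp only [Set.mem_Iio]
    by_contra h
    push_neg at h
    apply hk2
    rw [mem_novikovIdeal_pow_iff]
    intro i hi
    rw [coeff_adamsTerm]
    by_cases hd : k ∣ i
    · have hi0 : i = 0 := Nat.eq_zero_of_dvd_of_lt hd (lt_of_lt_of_le hi h) |>.symm ▸ rfl
      have : i = 0 := by
        rcases Nat.eq_zero_or_pos i with h0 | h0
        · exact h0
        · exact absurd (Nat.le_of_dvd h0 hd) (by omega)
      subst this
      simp [if_pos hd, PowerSeries.coeff_zero_eq_constantCoeff_apply, ht0]
    · rw [if_neg hd, mul_zero]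
  · exact Set.InvOn.bijOn
      ⟨fun t ht => invSeries_adamsSum t ((mem_novikovIdeal_iff t).1 ht),
        fun u hu => adamsSum_invSeries u ((mem_novikovIdeal_iff u).1 hu)⟩
      hmem
      (fun u _ => (mem_novikovIdeal_iff _).2 (constantCoeff_invSeries u))

end
end
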